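/- Suppose the network is a path multigraph: there is N ≥ 1 and nonempty finite link sets 𝓛_1, …, 𝓛_N with 𝓛 the disjoint union of the 𝓛_i, the path set is 𝓟 = 𝓛_1 × ⋯ × 𝓛_N, and for a link a ∈ 𝓛_i and path p = (p_1, …, p_N) one has Δ_{ap} = 1 if and only if p_i = a. Under the BPR assumption, for every α ∈ [0,1], every equilibrium (x^H, x^A) with autonomous fraction α, and every baseline equilibrium x̃ (α = 0): S(Δ(x^H + x^A)) ≤ S(Δx̃), with strict inequality whenever Δ(x^H + x^A) ≠ Δx̃. -/

import Mathlib

open scoped BigOperators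

/-- Aggregated link flow `f = Δ x`. -/
noncomputable def aggFlow {L P : Type*} [Fintype P] (Δ : L → P → ℝ) (x : P → ℝ) : L → ℝ :=
  fun a => ∑ p, Δ a p * x p

/-- Human path cost `C_p^H(f) = Σ_a Δ_{ap} t_a(f_a)`. -/
noncomputable def CH {L P : Type*} [Fintype L] (Δ : L → P → ℝ) (t : L → ℝ → ℝ)
    (f : L → ℝ) (p : P) : ℝ :=
  ∑ a, Δ a p * t a (f a)

/-- Autonomous (marginal social) path cost
`C_p^A(f) = Σ_a Δ_{ap} (t_a(f_a) + f_a t_a'(f_a))`. -/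
noncomputable def CA {L P : Type*} [Fintype L] (Δ : L → P → ℝ) (t : L → ℝ → ℝ)
    (f : L → ℝ) (p : P) : ℝ :=
  ∑ a, Δ a p * (t a (f a) + f a * deriv (t a) (f a))

/-- Social cost `S(f) = Σ_a f_a t_a(f_a)`. -/
noncomputable def Scost {L : Type*} [Fintype L] (t : L → ℝ → ℝ) (f : L → ℝ) : ℝ :=
  ∑ a, f a * t a (f a)

/-- Equilibrium with autonomous fraction `α`: a feasible path flow pattern
together with multipliers `λ^H, λ^A` satisfying the Wardrop-like conditions. -/
noncomputable def IsEquilibrium {L P : Type*} [Fintype L] [Fintype P]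
    (Δ : L → P → ℝ) (t : L → ℝ → ℝ) (α : ℝ) (xH xA : P → ℝ) : Prop :=
  (∀ p, 0 ≤ xH p) ∧ (∀ p, 0 ≤ xA p) ∧ (∑ p, xH p = 1 - α) ∧ (∑ p, xA p = α) ∧
  ∃ lamH lamA : ℝ, ∀ p : P,
    (lamH ≤ CH Δ t (aggFlow Δ (fun r => xH r + xA r)) p ∧
      (0 < xH p → CH Δ t (aggFlow Δ (fun r => xH r + xA r)) p = lamH)) ∧
    (lamA ≤ CA Δ t (aggFlow Δ (fun r => xH r + xA r)) p ∧
      (0 < xA p → CA Δ t (aggFlow Δ (fun r => xH r + xA r)) p = lamA))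

/-- Baseline equilibrium (`α = 0`): a single nonnegative unit-demand path flow
vector satisfying the human Wardrop condition. -/
noncomputable def IsBaselineEquilibrium {L P : Type*} [Fintype L] [Fintype P]
    (Δ : L → P → ℝ) (t : L → ℝ → ℝ) (xt : P → ℝ) : Prop :=
  (∀ p, 0 ≤ xt p) ∧ (∑ p, xt p = 1) ∧
  ∃ lam : ℝ, ∀ p : P,
    lam ≤ CH Δ t (aggFlow Δ xt) p ∧ (0 < xt p → CH Δ t (aggFlow Δ xt) p = lam)

/-- BPR assumption: `t_a(z) = k_a z^n + b_a` for `z ≥ 0`, with `k_a > 0`,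
`b_a ≥ 0`, and exponent `n ≥ 1`. -/
def IsBPR {L : Type*} (t : L → ℝ → ℝ) (n : ℝ) (k b : L → ℝ) : Prop :=
  1 ≤ n ∧ (∀ a, 0 < k a) ∧ (∀ a, 0 ≤ b a) ∧
  ∀ a, ∀ z : ℝ, 0 ≤ z → t a z = k a * z ^ n + b a


section PMIHelpers

/-- Convexity gradient inequality for `rpow` at a positive point. -/
lemma pmi_rpow_grad {n x y : ℝ} (hn : 1 ≤ n) (hx : 0 < x) (hy : 0 ≤ y) :
    n * x ^ n * (y - x) ≤ x * (y ^ n - x ^ n) := by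
  have hxn : (0:ℝ) < x ^ n := Real.rpow_pos_of_pos hx n
  have hs : (-1:ℝ) ≤ y / x - 1 := by
    have : 0 ≤ y / x := div_nonneg hy hx.le
    linarith
  have hB := one_add_mul_self_le_rpow_one_add hs hn
  have hyx : (1:ℝ) + (y / x - 1) = y / x := by ring
  rw [hyx, Real.div_rpow hy hx.le] at hB
  have h2 : x ^ n * (1 + n * (y / x - 1)) ≤ y ^ n := by
    rw [mul_comm]
    exact (le_div_iff₀ hxn).mp hB
  have h3 := mul_le_mul_of_nonneg_left h2 hx.le
  have hexp : x * (x ^ n * (1 + n * (y / x - 1))) = x * x ^ n + n * x ^ n * (y - x) := by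
    field_simp
  rw [hexp] at h3
  nlinarith [h3]

set_option maxHeartbeats 2000000 in
/-- Per-link inequality, main case `lam < lt < mu`. -/
lemma pmi_link3 {n k b lam mu lt x y : ℝ} (hn : 1 ≤ n) (hk : 0 < k)
    (hx : 0 ≤ x) (hy : 0 ≤ y)
    (hlam : lam ≤ k * x ^ n + b) (hmu : mu ≤ (n + 1) * k * x ^ n + b)
    (hbr : 0 < x → k * x ^ n + b = lam ∨ (n + 1) * k * x ^ n + b = mu)
    (hlt : lt ≤ k * y ^ n + b) (hyt : 0 < y → k * y ^ n + b = lt)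
    (h1 : lam < lt) (h2 : lt < mu) :
    (mu - lt) * (y - x) ≤ x * (lt - (k * x ^ n + b)) ∧
      (x ≠ y → (mu - lt) * (y - x) < x * (lt - (k * x ^ n + b))) := by
  have hn0 : (0:ℝ) < n := by linarith
  rcases eq_or_lt_of_le hx with hx0 | hx0
  · -- x = 0
    have hx0' : x = 0 := hx0.symm
    subst hx0'
    have h0n : (0:ℝ) ^ n = 0 := Real.zero_rpow (by linarith)
    rw [h0n] at hmu
    have hbmu : mu ≤ b := by nlinarith [hmu]
    have hy0 : y = 0 := by
      by_contra h
      have hy' : 0 < y := lt_of_le_of_ne hy (Ne.symm h)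
      have hyn : 0 < y ^ n := Real.rpow_pos_of_pos hy' n
      have := hyt hy'
      nlinarith
    subst hy0
    constructor
    · simp
    · intro h; exact absurd rfl h
  · -- x > 0
    have hxn : (0:ℝ) < x ^ n := Real.rpow_pos_of_pos hx0 n
    rcases hbr hx0 with hH | hA
    · -- human branch : k x^n + b = lam
      have hkxn : k * x ^ n = lam - b := by linarith
      have hlb : 0 < lam - b := by nlinarith
      have hnlb : mu - lam ≤ n * (lam - b) := by
        have e1 : (n + 1) * k * x ^ n + b = lam + n * (lam - b) := by
          rw [show (n + 1) * k * x ^ n = (n + 1) * (k * x ^ n) by ring, hkxn]; ring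
        linarith [hmu, e1.symm.le, e1.le]
      have hy0 : 0 < y := by
        by_contra h
        push_neg at h
        have hy' : y = 0 := le_antisymm h hy
        rw [hy', Real.zero_rpow (by linarith : n ≠ 0)] at hlt
        nlinarith
      have hkyn : k * y ^ n = lt - b := by have := hyt hy0; linarith
      set d := lt - lam with hd_def
      set e := mu - lt with he_def
      have hd : 0 < d := by simp [hd_def]; linarith
      have he : 0 < e := by simp [he_def]; linarith
      set s := d / e with hs_def
      have hs0 : 0 < s := div_pos hd he
      have hes : e * s = d := by rw [hs_def]; field_simp [he.ne']
      have hBern : 1 + n * s ≤ (1 + s) ^ n :=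
        one_add_mul_self_le_rpow_one_add (by linarith) hn
      -- k y^n < k x^n (1 + n s)
      have key1 : k * y ^ n < k * x ^ n * (1 + n * s) := by
        rw [hkyn, hkxn]
        have h5 : d < (lam - b) * (n * s) := by
          have h6 : e + d ≤ n * (lam - b) := by linarith
          nlinarith [mul_le_mul_of_nonneg_right h6 hs0.le, mul_pos hd hs0]
        nlinarith
      have key2 : k * x ^ n * (1 + n * s) ≤ k * (x ^ n * (1 + s) ^ n) := by
        nlinarith [mul_le_mul_of_nonneg_left hBern (mul_pos hk hxn).le]
      have hyx : y < x * (1 + s) := by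
        by_contra h
        push_neg at h
        have h' : (x * (1 + s)) ^ n ≤ y ^ n :=
          Real.rpow_le_rpow (by positivity) h hn0.le
        rw [Real.mul_rpow hx0.le (by positivity)] at h'
        nlinarith
      have hmain : e * (y - x) < x * d := by
        have := mul_lt_mul_of_pos_left hyx he
        have hh : e * (x * (1 + s)) = e * x + x * d := by
          rw [show e * (x * (1 + s)) = e * x + x * (e * s) by ring, hes]
        nlinarith
      have hTx : lt - (k * x ^ n + b) = d := by rw [hH, hd_def]
      rw [hTx]
      exact ⟨hmain.le, fun _ => hmain⟩
    · -- autonomous branch : (n+1) k x^n + b = mu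
      have hkxn : (n + 1) * (k * x ^ n) = mu - b := by linear_combination hA
      rcases eq_or_lt_of_le hy with hy0 | hy0
      · -- y = 0
        have hy0' : y = 0 := hy0.symm
        subst hy0'
        have hmain : (mu - lt) * (0 - x) < x * (lt - (k * x ^ n + b)) := by
          have hpos : 0 < x * (n * (k * x ^ n)) := by
            have : 0 < n * (k * x ^ n) := mul_pos hn0 (mul_pos hk hxn)
            exact mul_pos hx0 this
          have hq : x * (lt - (k * x ^ n + b)) - (mu - lt) * (0 - x)
              = x * (n * (k * x ^ n)) := by linear_combination (-x) * hkxn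
          linarith [hpos, hq]
        exact ⟨hmain.le, fun _ => hmain⟩
      · -- y > 0
        have hkyn : k * y ^ n = lt - b := by have := hyt hy0; linarith
        have hTx : lt - (k * x ^ n + b) = k * y ^ n - k * x ^ n := by
          rw [hkyn]; ring
        rw [hTx]
        rcases lt_trichotomy x y with hxy | hxy | hxy
        · -- x < y  : coefficient n k x^n > mu - lt
          have hyn : x ^ n < y ^ n := Real.rpow_lt_rpow hx0.le hxy hn0
          have hkk : k * x ^ n < k * y ^ n := by nlinarith
          have hclt : mu - lt < n * (k * x ^ n) := by
            have : n * (k * x ^ n) = (mu - b) - k * x ^ n := by linear_combination hkxn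
            rw [this]
            linarith [hkk.trans_le hkyn.le]
          have hg := pmi_rpow_grad hn hx0 hy
          have hg' := mul_le_mul_of_nonneg_left hg hk.le
          have hp := mul_lt_mul_of_pos_right hclt (by linarith : (0:ℝ) < y - x)
          have hmain : (mu - lt) * (y - x) < x * (k * y ^ n - k * x ^ n) := by
            nlinarith [hp, hg']
          exact ⟨hmain.le, fun _ => hmain⟩
        · -- x = y
          subst hxy
          constructor
          · simp
          · intro h; exact absurd rfl h
        · -- y < x : coefficient n k x^n < mu - lt
          have hyn : y ^ n < x ^ n := Real.rpow_lt_rpow hy hxy hn0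
          have hkk : k * y ^ n < k * x ^ n := by nlinarith
          have hclt : n * (k * x ^ n) < mu - lt := by
            have : n * (k * x ^ n) = (mu - b) - k * x ^ n := by linear_combination hkxn
            rw [this]
            linarith [hkyn.symm.le]
          have hg := pmi_rpow_grad hn hx0 hy
          have hg' := mul_le_mul_of_nonneg_left hg hk.le
          have hp := mul_lt_mul_of_neg_right hclt (by linarith : y - x < 0)
          have hmain : (mu - lt) * (y - x) < x * (k * y ^ n - k * x ^ n) := by
            nlinarith [hp, hg']
          exact ⟨hmain.le, fun _ => hmain⟩

end PMIHelpers

/-- Marginal cost identity for BPR functions. -/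
lemma pmi_marg {t : ℝ → ℝ} {n k b x : ℝ} (hn : 1 ≤ n)
    (ht : ∀ z : ℝ, 0 ≤ z → t z = k * z ^ n + b) (hx : 0 ≤ x) :
    t x + x * deriv t x = (n + 1) * k * x ^ n + b := by
  rcases eq_or_lt_of_le hx with h0 | h0
  · have hx0 : x = 0 := h0.symm
    subst hx0
    rw [ht 0 le_rfl, Real.zero_rpow (by linarith : n ≠ 0)]
    ring
  · have hev : deriv t x = deriv (fun z : ℝ => k * z ^ n + b) x := by
      apply Filter.EventuallyEq.deriv_eq
      filter_upwards [Ioi_mem_nhds h0] with z hz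
      exact ht z (le_of_lt hz)
    have hder : HasDerivAt (fun z : ℝ => k * z ^ n + b) (k * (n * x ^ (n - 1))) x :=
      ((Real.hasDerivAt_rpow_const (Or.inl h0.ne')).const_mul k).add_const b
    rw [ht x hx, hev, hder.deriv]
    have hxx : x ^ (n - 1) * x = x ^ n := by
      rw [show x ^ (n-1) * x = x ^ (n-1) * x ^ (1:ℝ) by rw [Real.rpow_one],
        ← Real.rpow_add h0]
      norm_num
    have key : x * (k * (n * x ^ (n - 1))) = n * (k * x ^ n) := by
      rw [show x * (k * (n * x ^ (n-1))) = k * n * (x ^ (n-1) * x) by ring, hxx]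
      ring
    linear_combination key

set_option maxHeartbeats 1000000 in
/-- Per-stage comparison: mixed equilibrium social cost on a parallel stage is
at most the baseline social cost, strictly if flows differ. -/
lemma pmi_stage {ι : Type*} [Fintype ι] {n : ℝ} (hn : 1 ≤ n)
    {k b x y : ι → ℝ} (hk : ∀ a, 0 < k a)
    (hx : ∀ a, 0 ≤ x a) (hy : ∀ a, 0 ≤ y a)
    (hsx : ∑ a, x a = 1) (hsy : ∑ a, y a = 1)
    {lam mu lt : ℝ}
    (hlam : ∀ a, lam ≤ k a * x a ^ n + b a)
    (hmu : ∀ a, mu ≤ (n + 1) * k a * x a ^ n + b a)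
    (hbr : ∀ a, 0 < x a → k a * x a ^ n + b a = lam ∨ (n + 1) * k a * x a ^ n + b a = mu)
    (hlt : ∀ a, lt ≤ k a * y a ^ n + b a)
    (hyt : ∀ a, 0 < y a → k a * y a ^ n + b a = lt) :
    ∑ a, x a * (k a * x a ^ n + b a) ≤ ∑ a, y a * (k a * y a ^ n + b a) ∧
      (x ≠ y → ∑ a, x a * (k a * x a ^ n + b a) < ∑ a, y a * (k a * y a ^ n + b a)) := by
  have hn0 : (0:ℝ) < n := by linarith
  have hSy : ∑ a, y a * (k a * y a ^ n + b a) = lt := by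
    have hterm : ∀ a, y a * (k a * y a ^ n + b a) = y a * lt := by
      intro a
      rcases eq_or_lt_of_le (hy a) with h0 | h0
      · rw [← h0]; ring
      · rw [hyt a h0]
    calc ∑ a, y a * (k a * y a ^ n + b a) = ∑ a, y a * lt :=
          Finset.sum_congr rfl (fun a _ => hterm a)
      _ = (∑ a, y a) * lt := by rw [Finset.sum_mul]
      _ = lt := by rw [hsy, one_mul]
  rcases le_or_gt lt lam with hI | h1
  · -- Case I : lt ≤ lam, flows coincide
    have hxy : ∀ a, y a ≤ x a := by
      intro a
      rcases eq_or_lt_of_le (hy a) with h0 | h0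
      · rw [← h0]; exact hx a
      · have hTy := hyt a h0
        have hkk : k a * y a ^ n ≤ k a * x a ^ n := by linarith [hlam a]
        by_contra hcon
        push_neg at hcon
        have := Real.rpow_lt_rpow (hx a) hcon hn0
        nlinarith [hk a]
    have heq : ∀ a, y a = x a := by
      have hsum : ∑ a, y a = ∑ a, x a := by rw [hsx, hsy]
      intro a
      exact (Finset.sum_eq_sum_iff_of_le (fun i _ => hxy i)).mp hsum a (Finset.mem_univ a)
    have hxy' : x = y := funext (fun a => (heq a).symm)
    constructor
    · apply le_of_eq
      exact Finset.sum_congr rfl (fun a _ => by rw [heq a])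
    · intro h; exact absurd hxy' h
  · rcases le_or_gt mu lt with h2 | h2
    · -- Case II : mu ≤ lt, every used link strictly cheaper than lt
      have key : ∀ a, x a * (k a * x a ^ n + b a) ≤ x a * lt ∧
          (0 < x a → x a * (k a * x a ^ n + b a) < x a * lt) := by
        intro a
        rcases eq_or_lt_of_le (hx a) with h0 | h0
        · constructor
          · rw [← h0]; simp
          · intro hpos; rw [← h0] at hpos; exact absurd hpos (lt_irrefl 0)
        · have hT : k a * x a ^ n + b a < lt := by
            rcases hbr a h0 with hH | hA
            · rw [hH]; exact h1
            · have hxn : 0 < x a ^ n := Real.rpow_pos_of_pos h0 n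
              have : k a * x a ^ n + b a = mu - n * (k a * x a ^ n) := by
                linear_combination hA
              rw [this]
              nlinarith [mul_pos hn0 (mul_pos (hk a) hxn)]
          constructor
          · exact (mul_le_mul_of_nonneg_left hT.le h0.le)
          · intro _; exact mul_lt_mul_of_pos_left hT h0
      have hex : ∃ a, 0 < x a := by
        by_contra h
        push_neg at h
        have : ∑ a, x a ≤ 0 := Finset.sum_nonpos (fun a _ => h a)
        rw [hsx] at this; linarith
      obtain ⟨a0, ha0⟩ := hex
      have hstrict : ∑ a, x a * (k a * x a ^ n + b a) < ∑ a, x a * lt :=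
        Finset.sum_lt_sum (fun a _ => (key a).1) ⟨a0, Finset.mem_univ a0, (key a0).2 ha0⟩
      have hxlt : ∑ a, x a * lt = lt := by rw [← Finset.sum_mul, hsx, one_mul]
      rw [hSy]
      constructor
      · linarith [hstrict, hxlt.le]
      · intro _; linarith [hstrict, hxlt.le]
    · -- Case III : lam < lt < mu
      have hl := fun a => pmi_link3 hn (hk a) (hx a) (hy a) (hlam a) (hmu a) (hbr a)
        (hlt a) (hyt a) h1 h2
      have hzero : ∑ a, (mu - lt) * (y a - x a) = 0 := by
        rw [← Finset.mul_sum, Finset.sum_sub_distrib, hsx, hsy]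
        ring
      have hid : ∑ a, x a * (lt - (k a * x a ^ n + b a))
          = lt - ∑ a, x a * (k a * x a ^ n + b a) := by
        have : ∀ a, x a * (lt - (k a * x a ^ n + b a))
            = x a * lt - x a * (k a * x a ^ n + b a) := fun a => by ring
        rw [Finset.sum_congr rfl (fun a _ => this a), Finset.sum_sub_distrib,
          ← Finset.sum_mul, hsx, one_mul]
      constructor
      · have hle : ∑ a, (mu - lt) * (y a - x a)
            ≤ ∑ a, x a * (lt - (k a * x a ^ n + b a)) :=
          Finset.sum_le_sum (fun a _ => (hl a).1)
        rw [hzero, hid] at hle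
        rw [hSy]
        linarith
      · intro hne
        obtain ⟨a0, ha0⟩ : ∃ a, x a ≠ y a := by
          by_contra h
          push_neg at h
          exact hne (funext h)
        have hlt' : ∑ a, (mu - lt) * (y a - x a)
            < ∑ a, x a * (lt - (k a * x a ^ n + b a)) :=
          Finset.sum_lt_sum (fun a _ => (hl a).1) ⟨a0, Finset.mem_univ a0, (hl a0).2 ha0⟩
        rw [hzero, hid] at hlt'
        rw [hSy]
        linarith

set_option maxHeartbeats 1000000 in
/-- Improvement on path multigraphs: the network's links decompose as the
disjoint union of nonempty stages `𝓛_1, …, 𝓛_N` (`N ≥ 1`), the paths are exactly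
the tuples choosing one link per stage, and a link belongs to a path iff the path
chooses it at its stage. Under the BPR assumption, the social cost at any
mixed-autonomy equilibrium does not exceed the social cost at any baseline
equilibrium, strictly so whenever the aggregated link flows differ. -/
theorem path_multigraph_improvement (N : ℕ) (hN : 1 ≤ N)
    (Li : Fin N → Type*) [∀ i, Fintype (Li i)] [∀ i, Nonempty (Li i)]
    [∀ i, DecidableEq (Li i)]
    (t : (Σ i : Fin N, Li i) → ℝ → ℝ)
    (Δ : (Σ i : Fin N, Li i) → (∀ i : Fin N, Li i) → ℝ)
    (hΔ : ∀ (a : Σ i : Fin N, Li i) (p : ∀ i : Fin N, Li i),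
      Δ a p = if p a.1 = a.2 then 1 else 0)
    (n : ℝ) (k b : (Σ i : Fin N, Li i) → ℝ) (hBPR : IsBPR t n k b)
    (α : ℝ) (hα : α ∈ Set.Icc (0:ℝ) 1)
    (xH xA : (∀ i : Fin N, Li i) → ℝ) (heq : IsEquilibrium Δ t α xH xA)
    (xt : (∀ i : Fin N, Li i) → ℝ) (hxt : IsBaselineEquilibrium Δ t xt) :
    Scost t (aggFlow Δ (fun r => xH r + xA r)) ≤ Scost t (aggFlow Δ xt) ∧
    (aggFlow Δ (fun r => xH r + xA r) ≠ aggFlow Δ xt →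
      Scost t (aggFlow Δ (fun r => xH r + xA r)) < Scost t (aggFlow Δ xt)) := by
  classical
  obtain ⟨hn, hk, hb, ht⟩ := hBPR
  unfold IsEquilibrium at heq
  obtain ⟨hH0, hA0, hHs, hAs, lamH, lamA, hW⟩ := heq
  unfold IsBaselineEquilibrium at hxt
  obtain ⟨ht0, hts, lamT, hWt⟩ := hxt
  -- generic facts about aggregated flows
  have hflow : ∀ (z : (∀ j, Li j) → ℝ) (i : Fin N) (a : Li i),
      aggFlow Δ z ⟨i, a⟩ = ∑ p : (∀ j, Li j), (if p i = a then z p else 0) := by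
    intro z i a
    unfold aggFlow
    refine Finset.sum_congr rfl (fun p _ => ?_)
    rw [hΔ ⟨i, a⟩ p]
    by_cases h : p i = a <;> simp [h]
  have hflow_nonneg : ∀ (z : (∀ j, Li j) → ℝ), (∀ p, 0 ≤ z p) →
      ∀ s : (Σ i, Li i), 0 ≤ aggFlow Δ z s := by
    intro z hz s
    unfold aggFlow
    refine Finset.sum_nonneg (fun p _ => ?_)
    rw [hΔ s p]
    by_cases h : p s.1 = s.2 <;> simp [h, hz p]
  have hstagesum : ∀ (z : (∀ j, Li j) → ℝ) (i : Fin N),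
      ∑ a : Li i, aggFlow Δ z ⟨i, a⟩ = ∑ p, z p := by
    intro z i
    rw [Finset.sum_congr rfl (fun a _ => hflow z i a), Finset.sum_comm]
    refine Finset.sum_congr rfl (fun p _ => ?_)
    rw [Finset.sum_ite_eq]
    simp
  have hdecomp : ∀ (c : (Σ i, Li i) → ℝ) (p : ∀ j, Li j),
      ∑ a : (Σ i, Li i), Δ a p * c a = ∑ i : Fin N, c ⟨i, p i⟩ := by
    intro c p
    rw [← Finset.univ_sigma_univ, Finset.sum_sigma]
    refine Finset.sum_congr rfl (fun i _ => ?_)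
    have hterm : ∀ a : Li i, Δ ⟨i, a⟩ p * c ⟨i, a⟩ = if p i = a then c ⟨i, a⟩ else 0 := by
      intro a
      rw [hΔ ⟨i, a⟩ p]
      by_cases h : p i = a <;> simp [h]
    rw [Finset.sum_congr rfl (fun a _ => hterm a), Finset.sum_ite_eq]
    simp
  -- the exchange (swap) argument
  have hswap : ∀ (c : (Σ i, Li i) → ℝ) (lam0 : ℝ) (p : ∀ j, Li j),
      (∀ q, lam0 ≤ ∑ a : (Σ i, Li i), Δ a q * c a) →
      (∑ a : (Σ i, Li i), Δ a p * c a) = lam0 →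
      ∀ (i : Fin N) (a' : Li i), c ⟨i, p i⟩ ≤ c ⟨i, a'⟩ := by
    intro c lam0 p hmin hpeq i a'
    have hq := hmin (Function.update p i a')
    rw [hdecomp] at hq hpeq
    have hsplit : ∀ (r : ∀ j, Li j), ∑ j, c ⟨j, r j⟩
        = c ⟨i, r i⟩ + ∑ j ∈ Finset.univ.erase i, c ⟨j, r j⟩ :=
      fun r => (Finset.add_sum_erase Finset.univ (fun j => c ⟨j, r j⟩)
        (Finset.mem_univ i)).symm
    rw [hsplit p] at hpeq
    rw [hsplit (Function.update p i a')] at hq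
    have herase : ∑ j ∈ Finset.univ.erase i, c ⟨j, Function.update p i a' j⟩
        = ∑ j ∈ Finset.univ.erase i, c ⟨j, p j⟩ := by
      refine Finset.sum_congr rfl (fun j hj => ?_)
      have hji : j ≠ i := Finset.ne_of_mem_erase hj
      rw [Function.update_of_ne hji]
    rw [herase, Function.update_self] at hq
    linarith
  -- social cost decomposition over stages
  have hS : ∀ (z : (∀ j, Li j) → ℝ), (∀ p, 0 ≤ z p) →
      Scost t (aggFlow Δ z) = ∑ i : Fin N, ∑ a : Li i,
        (aggFlow Δ z ⟨i, a⟩) * (k ⟨i, a⟩ * (aggFlow Δ z ⟨i, a⟩) ^ n + b ⟨i, a⟩) := by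
    intro z hz
    unfold Scost
    rw [← Finset.univ_sigma_univ, Finset.sum_sigma]
    exact Finset.sum_congr rfl (fun i _ => Finset.sum_congr rfl (fun a _ => by
      rw [ht ⟨i, a⟩ _ (hflow_nonneg z hz ⟨i, a⟩)]))
  have hzH : ∀ p, 0 ≤ xH p + xA p := fun p => add_nonneg (hH0 p) (hA0 p)
  -- stage-wise comparison via `pmi_stage`
  have hstage : ∀ i : Fin N,
      (∑ a : Li i, (aggFlow Δ (fun r => xH r + xA r) ⟨i, a⟩) *
          (k ⟨i, a⟩ * (aggFlow Δ (fun r => xH r + xA r) ⟨i, a⟩) ^ n + b ⟨i, a⟩))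
        ≤ (∑ a : Li i, (aggFlow Δ xt ⟨i, a⟩) *
          (k ⟨i, a⟩ * (aggFlow Δ xt ⟨i, a⟩) ^ n + b ⟨i, a⟩)) ∧
      ((fun a : Li i => aggFlow Δ (fun r => xH r + xA r) ⟨i, a⟩)
          ≠ (fun a : Li i => aggFlow Δ xt ⟨i, a⟩) →
        (∑ a : Li i, (aggFlow Δ (fun r => xH r + xA r) ⟨i, a⟩) *
          (k ⟨i, a⟩ * (aggFlow Δ (fun r => xH r + xA r) ⟨i, a⟩) ^ n + b ⟨i, a⟩))
        < (∑ a : Li i, (aggFlow Δ xt ⟨i, a⟩) *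
          (k ⟨i, a⟩ * (aggFlow Δ xt ⟨i, a⟩) ^ n + b ⟨i, a⟩))) := by
    intro i
    have hne : (Finset.univ : Finset (Li i)).Nonempty := Finset.univ_nonempty
    have hxnn : ∀ a : Li i, 0 ≤ aggFlow Δ (fun r => xH r + xA r) ⟨i, a⟩ :=
      fun a => hflow_nonneg _ hzH ⟨i, a⟩
    have hynn : ∀ a : Li i, 0 ≤ aggFlow Δ xt ⟨i, a⟩ :=
      fun a => hflow_nonneg _ ht0 ⟨i, a⟩
    have hsx : ∑ a : Li i, aggFlow Δ (fun r => xH r + xA r) ⟨i, a⟩ = 1 := by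
      rw [hstagesum, Finset.sum_add_distrib, hHs, hAs]; ring
    have hsy : ∑ a : Li i, aggFlow Δ xt ⟨i, a⟩ = 1 := by
      rw [hstagesum]; exact hts
    set lamI : ℝ := Finset.univ.inf' hne
      (fun a : Li i => k ⟨i, a⟩ * (aggFlow Δ (fun r => xH r + xA r) ⟨i, a⟩) ^ n + b ⟨i, a⟩)
      with hlamI
    set muI : ℝ := Finset.univ.inf' hne
      (fun a : Li i => (n + 1) * k ⟨i, a⟩ *
        (aggFlow Δ (fun r => xH r + xA r) ⟨i, a⟩) ^ n + b ⟨i, a⟩) with hmuI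
    set ltI : ℝ := Finset.univ.inf' hne
      (fun a : Li i => k ⟨i, a⟩ * (aggFlow Δ xt ⟨i, a⟩) ^ n + b ⟨i, a⟩) with hltI
    have hlam : ∀ a : Li i,
        lamI ≤ k ⟨i, a⟩ * (aggFlow Δ (fun r => xH r + xA r) ⟨i, a⟩) ^ n + b ⟨i, a⟩ :=
      fun a => Finset.inf'_le _ (Finset.mem_univ a)
    have hmu : ∀ a : Li i,
        muI ≤ (n + 1) * k ⟨i, a⟩ * (aggFlow Δ (fun r => xH r + xA r) ⟨i, a⟩) ^ n + b ⟨i, a⟩ :=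
      fun a => Finset.inf'_le _ (Finset.mem_univ a)
    have hlt : ∀ a : Li i,
        ltI ≤ k ⟨i, a⟩ * (aggFlow Δ xt ⟨i, a⟩) ^ n + b ⟨i, a⟩ :=
      fun a => Finset.inf'_le _ (Finset.mem_univ a)
    -- used links attain the minimum
    have hbr : ∀ a : Li i, 0 < aggFlow Δ (fun r => xH r + xA r) ⟨i, a⟩ →
        k ⟨i, a⟩ * (aggFlow Δ (fun r => xH r + xA r) ⟨i, a⟩) ^ n + b ⟨i, a⟩ = lamI ∨
        (n + 1) * k ⟨i, a⟩ * (aggFlow Δ (fun r => xH r + xA r) ⟨i, a⟩) ^ n + b ⟨i, a⟩ = muI := by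
      intro a hpos
      have h1 : ∑ p : (∀ j, Li j), (0:ℝ) <
          ∑ p : (∀ j, Li j), (if p i = a then xH p + xA p else 0) := by
        rw [Finset.sum_const_zero, ← hflow]
        exact hpos
      obtain ⟨p, -, hp⟩ := Finset.exists_lt_of_sum_lt h1
      have hpia : p i = a := by
        by_contra h
        rw [if_neg h] at hp
        exact lt_irrefl 0 hp
      rw [if_pos hpia] at hp
      rcases lt_or_ge 0 (xH p) with hHp | hHp
      · left
        have hmin : ∀ a' : Li i,
            k ⟨i, a⟩ * (aggFlow Δ (fun r => xH r + xA r) ⟨i, a⟩) ^ n + b ⟨i, a⟩ ≤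
            k ⟨i, a'⟩ * (aggFlow Δ (fun r => xH r + xA r) ⟨i, a'⟩) ^ n + b ⟨i, a'⟩ := by
          intro a'
          have hsw := hswap (fun s => t s (aggFlow Δ (fun r => xH r + xA r) s)) lamH p
            (fun q => ((hW q).1).1) (((hW p).1).2 hHp) i a'
          rw [hpia] at hsw
          rwa [ht ⟨i, a⟩ _ (hxnn a), ht ⟨i, a'⟩ _ (hxnn a')] at hsw
        exact le_antisymm (Finset.le_inf' hne _ (fun a' _ => hmin a'))
          (Finset.inf'_le _ (Finset.mem_univ a))
      · right
        have hAp : 0 < xA p := by linarith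
        have hmin : ∀ a' : Li i,
            (n + 1) * k ⟨i, a⟩ * (aggFlow Δ (fun r => xH r + xA r) ⟨i, a⟩) ^ n + b ⟨i, a⟩ ≤
            (n + 1) * k ⟨i, a'⟩ * (aggFlow Δ (fun r => xH r + xA r) ⟨i, a'⟩) ^ n + b ⟨i, a'⟩ := by
          intro a'
          have hsw := hswap (fun s => t s (aggFlow Δ (fun r => xH r + xA r) s) +
              (aggFlow Δ (fun r => xH r + xA r) s) *
                deriv (t s) (aggFlow Δ (fun r => xH r + xA r) s)) lamA p
            (fun q => ((hW q).2).1) (((hW p).2).2 hAp) i a'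
          rw [hpia] at hsw
          rwa [pmi_marg hn (fun z hz => ht ⟨i, a⟩ z hz) (hxnn a),
            pmi_marg hn (fun z hz => ht ⟨i, a'⟩ z hz) (hxnn a')] at hsw
        exact le_antisymm (Finset.le_inf' hne _ (fun a' _ => hmin a'))
          (Finset.inf'_le _ (Finset.mem_univ a))
    have hyt : ∀ a : Li i, 0 < aggFlow Δ xt ⟨i, a⟩ →
        k ⟨i, a⟩ * (aggFlow Δ xt ⟨i, a⟩) ^ n + b ⟨i, a⟩ = ltI := by
      intro a hpos
      have h1 : ∑ p : (∀ j, Li j), (0:ℝ) <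
          ∑ p : (∀ j, Li j), (if p i = a then xt p else 0) := by
        rw [Finset.sum_const_zero, ← hflow]
        exact hpos
      obtain ⟨p, -, hp⟩ := Finset.exists_lt_of_sum_lt h1
      have hpia : p i = a := by
        by_contra h
        rw [if_neg h] at hp
        exact lt_irrefl 0 hp
      rw [if_pos hpia] at hp
      have hmin : ∀ a' : Li i,
          k ⟨i, a⟩ * (aggFlow Δ xt ⟨i, a⟩) ^ n + b ⟨i, a⟩ ≤
          k ⟨i, a'⟩ * (aggFlow Δ xt ⟨i, a'⟩) ^ n + b ⟨i, a'⟩ := by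
        intro a'
        have hsw := hswap (fun s => t s (aggFlow Δ xt s)) lamT p
          (fun q => (hWt q).1) ((hWt p).2 hp) i a'
        rw [hpia] at hsw
        rwa [ht ⟨i, a⟩ _ (hynn a), ht ⟨i, a'⟩ _ (hynn a')] at hsw
      exact le_antisymm (Finset.le_inf' hne _ (fun a' _ => hmin a'))
        (Finset.inf'_le _ (Finset.mem_univ a))
    exact pmi_stage hn (fun a : Li i => hk ⟨i, a⟩) hxnn hynn hsx hsy hlam hmu hbr hlt hyt
  -- assemble
  rw [hS (fun r => xH r + xA r) hzH, hS xt ht0]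
  constructor
  · exact Finset.sum_le_sum (fun i _ => (hstage i).1)
  · intro hneq
    obtain ⟨s0, hs0⟩ := Function.ne_iff.mp hneq
    refine Finset.sum_lt_sum (fun i _ => (hstage i).1)
      ⟨s0.1, Finset.mem_univ _, (hstage s0.1).2 ?_⟩
    intro hcontra
    exact hs0 (congrFun hcontra s0.2)
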